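/- arXiv:0905.2079 — 3 statements merged into one kernel-verified Lean document; each statement's English description precedes it below -/
import Mathlib

section
/- Let X be a real infinite-dimensional Banach space, m an even positive integer, 0 < q < 1 and r ≥ 1. If every continuous m-homogeneous polynomial P : X → ℝ is absolutely (q;r)-summing, then the identity operator on X is absolutely (mq/(1-q); r)-summing. -/
open scoped BigOperators

/-- The weak ℓ_r norm of a finite family in `X`: `sup_{‖φ‖ ≤ 1} (∑_j ‖φ(x_j)‖^r)^(1/r)`. -/
noncomputable def weakNorm (𝕜 : Type*) [RCLike 𝕜] {X : Type*} [NormedAddCommGroup X]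
    [NormedSpace 𝕜 X] (r : ℝ) {n : ℕ} (x : Fin n → X) : ℝ :=
  ⨆ φ : {φ : X →L[𝕜] 𝕜 // ‖φ‖ ≤ 1}, (∑ j, ‖(φ : X →L[𝕜] 𝕜) (x j)‖ ^ r) ^ (1 / r)

/-- A sequence `x` in `X` is weakly `r`-summable if `(φ(x_j))_j ∈ ℓ_r` for every `φ ∈ X*`. -/
def WeaklySummable (𝕜 : Type*) [RCLike 𝕜] {X : Type*} [NormedAddCommGroup X]
    [NormedSpace 𝕜 X] (r : ℝ) (x : ℕ → X) : Prop :=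
  ∀ φ : X →L[𝕜] 𝕜, Summable fun j => ‖φ (x j)‖ ^ r

/-- `P : X → ℝ` is a continuous `m`-homogeneous polynomial. -/
def IsHomogPoly {X : Type*} [NormedAddCommGroup X] [NormedSpace ℝ X] (m : ℕ) (P : X → ℝ) :
    Prop :=
  ∃ A : ContinuousMultilinearMap ℝ (fun _ : Fin m => X) ℝ, ∀ x, P x = A (fun _ => x)

section Aux

variable {X : Type*} [NormedAddCommGroup X] [NormedSpace ℝ X]

lemma weakNorm_bddAbove (r : ℝ) (hr : 0 < r) {n : ℕ} (x : Fin n → X) :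
    BddAbove (Set.range fun φ : {φ : X →L[ℝ] ℝ // ‖φ‖ ≤ 1} =>
      (∑ j, ‖(φ : X →L[ℝ] ℝ) (x j)‖ ^ r) ^ (1 / r)) := by
  refine ⟨(∑ j, ‖x j‖ ^ r) ^ (1 / r), ?_⟩
  rintro _ ⟨φ, rfl⟩
  refine Real.rpow_le_rpow (by positivity) (Finset.sum_le_sum fun j _ => ?_) (by positivity)
  refine Real.rpow_le_rpow (norm_nonneg _) ?_ hr.le
  calc ‖(φ : X →L[ℝ] ℝ) (x j)‖ ≤ ‖(φ : X →L[ℝ] ℝ)‖ * ‖x j‖ := (φ : X →L[ℝ] ℝ).le_opNorm _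
    _ ≤ 1 * ‖x j‖ := mul_le_mul_of_nonneg_right φ.2 (norm_nonneg _)
    _ = ‖x j‖ := one_mul _

lemma weakNorm_nonneg' (r : ℝ) (hr : 0 < r) {n : ℕ} (x : Fin n → X) :
    0 ≤ weakNorm ℝ r x := by
  have h := le_ciSup (weakNorm_bddAbove r hr x) (⟨0, by simp⟩ : {φ : X →L[ℝ] ℝ // ‖φ‖ ≤ 1})
  refine le_trans ?_ h
  positivity

lemma norm_le_weakNorm (r : ℝ) (hr : 0 < r) {n : ℕ} (x : Fin n → X) (j : Fin n) :
    ‖x j‖ ≤ weakNorm ℝ r x := by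
  obtain ⟨φ, hφ1, hφ2⟩ := exists_dual_vector'' ℝ (x j)
  have hφ2' : φ (x j) = ‖x j‖ := by simpa using hφ2
  have key : ‖x j‖ = (‖φ (x j)‖ ^ r) ^ (1 / r) := by
    rw [hφ2', Real.norm_of_nonneg (norm_nonneg _), one_div,
      Real.rpow_rpow_inv (norm_nonneg _) hr.ne']
  have h1 : (‖φ (x j)‖ ^ r) ^ (1 / r) ≤ (∑ i, ‖φ (x i)‖ ^ r) ^ (1 / r) := by
    refine Real.rpow_le_rpow (by positivity) ?_ (by positivity)
    exact Finset.single_le_sum (f := fun i => ‖φ (x i)‖ ^ r) (fun i _ => by positivity)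
      (Finset.mem_univ j)
  have h2 := le_ciSup (weakNorm_bddAbove r hr x) (⟨φ, hφ1⟩ : {φ : X →L[ℝ] ℝ // ‖φ‖ ≤ 1})
  calc ‖x j‖ = (‖φ (x j)‖ ^ r) ^ (1 / r) := key
    _ ≤ (∑ i, ‖φ (x i)‖ ^ r) ^ (1 / r) := h1
    _ ≤ weakNorm ℝ r x := h2

end Aux

set_option maxHeartbeats 1000000 in
/-- If every continuous `m`-homogeneous real polynomial (`m` even) is absolutely
`(q;r)`-summing, then `id_X` is absolutely `(mq/(1-q); r)`-summing. -/
theorem stmt9 {X : Type*} [NormedAddCommGroup X] [NormedSpace ℝ X] [CompleteSpace X]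
    (hdim : ¬ FiniteDimensional ℝ X) (m : ℕ) (hm : 0 < m) (hmeven : Even m)
    (q r : ℝ) (hq0 : 0 < q) (hq1 : q < 1) (hr : 1 ≤ r)
    (hsum : ∀ P : X → ℝ, IsHomogPoly m P →
      ∃ C : ℝ, 0 ≤ C ∧ ∀ (n : ℕ) (x : Fin n → X),
        (∑ j, ‖P (x j)‖ ^ q) ^ (1 / q) ≤ C * (weakNorm ℝ r x) ^ m) :
    ∃ C : ℝ, 0 ≤ C ∧ ∀ (n : ℕ) (x : Fin n → X),
      (∑ j, ‖x j‖ ^ (m * q / (1 - q))) ^ ((1 - q) / (m * q)) ≤ C * weakNorm ℝ r x := by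
  classical
  by_contra hcon
  push_neg at hcon
  have hr0 : (0:ℝ) < r := lt_of_lt_of_le one_pos hr
  have hm0 : (0:ℝ) < (m:ℝ) := by exact_mod_cast hm
  have h1q : (0:ℝ) < 1 - q := by linarith
  set s : ℝ := ↑m * q / (1 - q) with hs_def
  have hs : 0 < s := by positivity
  have hms : ↑m * q = s * (1 - q) := by rw [hs_def, div_mul_cancel₀ _ h1q.ne']
  have hsq : (s + ↑m) * q = s := by linear_combination hms
  have hexp : ((1 - q) / (↑m * q)) * ↑m = (1 - q) / q := by field_simp
  -- choose bad families
  choose n x hx using fun k : ℕ => hcon ((2:ℝ)^k * ((k:ℝ)+1)) (by positivity)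
  -- norming functionals
  choose φ hφ1 hφ2 using fun k (j : Fin (n k)) => exists_dual_vector'' ℝ (x k j)
  have hφ2' : ∀ k j, φ k j (x k j) = ‖x k j‖ := fun k j => by simpa using hφ2 k j
  have hTpos : ∀ k, 0 < ∑ j, ‖x k j‖ ^ s := by
    intro k
    rcases (lt_or_eq_of_le (by positivity : (0:ℝ) ≤ ∑ j, ‖x k j‖ ^ s)) with h | h
    · exact h
    · exfalso
      have h1 := hx k
      rw [← h, Real.zero_rpow (by positivity : (0:ℝ) < (1 - q) / (↑m * q)).ne'] at h1
      have h2 : (0:ℝ) ≤ (2:ℝ)^k * ((k:ℝ)+1) * weakNorm ℝ r (x k) :=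
        mul_nonneg (by positivity) (weakNorm_nonneg' r hr0 (x k))
      linarith
  have hWpos : ∀ k, 0 < weakNorm ℝ r (x k) := by
    intro k
    rcases (lt_or_eq_of_le (weakNorm_nonneg' r hr0 (x k))) with h | h
    · exact h
    · exfalso
      have hx0 : ∀ j, ‖x k j‖ = 0 := fun j =>
        le_antisymm (h ▸ norm_le_weakNorm r hr0 (x k) j) (norm_nonneg _)
      have : (∑ j, ‖x k j‖ ^ s) = 0 := by
        refine Finset.sum_eq_zero fun j _ => ?_
        rw [hx0 j, Real.zero_rpow hs.ne']
      exact absurd this (hTpos k).ne'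
  -- the building-block polynomials
  have hne : Nonempty (Fin m) := ⟨⟨0, hm⟩⟩
  set Φ : ∀ k : ℕ, Fin (n k) → ContinuousMultilinearMap ℝ (fun _ : Fin m => X) ℝ :=
    fun k j => (ContinuousMultilinearMap.mkPiAlgebra ℝ (Fin m) ℝ).compContinuousLinearMap
      (fun _ => φ k j) with hΦ_def
  have hΦnorm : ∀ k j, ‖Φ k j‖ ≤ 1 := by
    intro k j
    rw [hΦ_def]
    refine le_trans (ContinuousMultilinearMap.norm_compContinuousLinearMap_le _ _) ?_
    refine mul_le_one₀ ContinuousMultilinearMap.norm_mkPiAlgebra_le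
      (Finset.prod_nonneg fun _ _ => norm_nonneg _)
      (Finset.prod_le_one (fun _ _ => norm_nonneg _) (fun _ _ => hφ1 k j))
  have hΦapply : ∀ k j (v : X), Φ k j (fun _ => v) = (φ k j v) ^ m := by
    intro k j v
    rw [hΦ_def]
    simp [ContinuousMultilinearMap.compContinuousLinearMap_apply,
      ContinuousMultilinearMap.mkPiAlgebra_apply, Finset.prod_const, Finset.card_univ]
  set B : ℕ → ContinuousMultilinearMap ℝ (fun _ : Fin m => X) ℝ := fun k =>
    ((1/2:ℝ)^k / ∑ j, ‖x k j‖ ^ s) • ∑ j, (‖x k j‖ ^ s) • Φ k j with hB_def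
  have hBapply : ∀ k (v : X), B k (fun _ => v)
      = ((1/2:ℝ)^k / ∑ j, ‖x k j‖ ^ s) * ∑ j, ‖x k j‖ ^ s * (φ k j v)^m := by
    intro k v
    rw [hB_def]
    simp only [ContinuousMultilinearMap.smul_apply, ContinuousMultilinearMap.sum_apply,
      smul_eq_mul]
    congr 1
    exact Finset.sum_congr rfl fun j _ => by rw [hΦapply]
  have hBnorm : ∀ k, ‖B k‖ ≤ (1/2:ℝ)^k := by
    intro k
    rw [hB_def]
    have h1 : ‖∑ j, (‖x k j‖ ^ s) • Φ k j‖ ≤ ∑ j, ‖x k j‖ ^ s := by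
      refine le_trans (norm_sum_le _ _) (Finset.sum_le_sum fun j _ => ?_)
      refine le_trans (ContinuousMultilinearMap.opNorm_smul_le _ _) ?_
      rw [Real.norm_of_nonneg (by positivity)]
      exact mul_le_of_le_one_right (by positivity) (hΦnorm k j)
    refine le_trans (ContinuousMultilinearMap.opNorm_smul_le _ _) ?_
    rw [Real.norm_of_nonneg (div_nonneg (by positivity) (hTpos k).le)]
    refine le_trans (mul_le_mul_of_nonneg_left h1
      (div_nonneg (by positivity) (hTpos k).le)) ?_
    rw [div_mul_cancel₀ _ (hTpos k).ne']
  have hBsum : Summable B :=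
    Summable.of_norm_bounded summable_geometric_two (fun k => by
      simpa using hBnorm k)
  set A : ContinuousMultilinearMap ℝ (fun _ : Fin m => X) ℝ := ∑' k, B k with hA_def
  have hAev : ∀ v : X, A (fun _ => v) = ∑' k, B k (fun _ => v) := fun v => by
    rw [hA_def]; exact ContinuousMultilinearMap.tsum_eval hBsum _
  have hsummev : ∀ v : X, Summable fun k => B k (fun _ => v) :=
    fun v => (ContinuousMultilinearMap.hasSum_eval hBsum.hasSum _).summable
  have hBnn : ∀ k (v : X), 0 ≤ B k (fun _ => v) := by
    intro k v
    rw [hBapply]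
    refine mul_nonneg (by positivity) (Finset.sum_nonneg fun j _ => ?_)
    exact mul_nonneg (by positivity) (hmeven.pow_nonneg _)
  have hBle : ∀ k (v : X), B k (fun _ => v) ≤ A (fun _ => v) := by
    intro k v
    rw [hAev]
    exact Summable.le_tsum (hsummev v) k (fun i _ => hBnn i v)
  obtain ⟨C, hC0, hC⟩ := hsum (fun v => A (fun _ => v)) ⟨A, fun _ => rfl⟩
  -- per-k contradiction
  have hk : ∀ k : ℕ, ((k:ℝ)+1) < C := by
    intro k
    have hCk := hC (n k) (x k)
    have hxk := hx k
    set W := weakNorm ℝ r (x k) with hW_def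
    set T := ∑ j, ‖x k j‖ ^ s with hT_def
    have hTp : 0 < T := hTpos k
    have hWp : 0 < W := hWpos k
    -- per-j lower bound
    have hA_lb : ∀ j, ((1/2:ℝ)^k / T) * ‖x k j‖ ^ (s + ↑m) ≤ ‖A (fun _ => x k j)‖ := by
      intro j
      have h1 : ((1/2:ℝ)^k / T) * (‖x k j‖ ^ s * ‖x k j‖ ^ m) ≤ B k (fun _ => x k j) := by
        rw [hBapply, ← hT_def]
        refine mul_le_mul_of_nonneg_left ?_ (by positivity)
        have hsingle := Finset.single_le_sum
          (f := fun j' => ‖x k j'‖ ^ s * (φ k j' (x k j))^m)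
          (fun i _ => mul_nonneg (by positivity) (hmeven.pow_nonneg _)) (Finset.mem_univ j)
        calc ‖x k j‖ ^ s * ‖x k j‖ ^ m = ‖x k j‖ ^ s * (φ k j (x k j))^m := by
              rw [hφ2' k j]
          _ ≤ ∑ j', ‖x k j'‖ ^ s * (φ k j' (x k j))^m := hsingle
      have h3 : B k (fun _ => x k j) ≤ ‖A (fun _ => x k j)‖ :=
        le_trans (hBle k (x k j)) (le_abs_self _)
      refine le_trans (le_of_eq ?_) (le_trans h1 h3)
      rw [Real.rpow_add' (norm_nonneg _) (by positivity : (0:ℝ) < s + ↑m).ne',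
        Real.rpow_natCast]
    -- sum lower bound
    have hterm : ∀ j : Fin (n k), (((1/2:ℝ)^k / T) * ‖x k j‖ ^ (s + ↑m)) ^ q
        = ((1/2:ℝ)^k / T) ^ q * ‖x k j‖ ^ s := by
      intro j
      rw [Real.mul_rpow (by positivity) (by positivity), ← Real.rpow_mul (norm_nonneg _), hsq]
    have hsum_lb : ((1/2:ℝ)^k / T) ^ q * T ≤ ∑ j, ‖A (fun _ => x k j)‖ ^ q := by
      have h4 : ∀ j ∈ Finset.univ, (((1/2:ℝ)^k / T) * ‖x k j‖ ^ (s + ↑m)) ^ q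
          ≤ ‖A (fun _ => x k j)‖ ^ q := fun j _ =>
        Real.rpow_le_rpow (by positivity) (hA_lb j) hq0.le
      calc ((1/2:ℝ)^k / T) ^ q * T
          = ∑ j, (((1/2:ℝ)^k / T) * ‖x k j‖ ^ (s + ↑m)) ^ q := by
            simp_rw [hterm]; rw [← Finset.mul_sum, ← hT_def]
        _ ≤ ∑ j, ‖A (fun _ => x k j)‖ ^ q := Finset.sum_le_sum h4
    -- apply the summing inequality
    have h5 : (((1/2:ℝ)^k / T) ^ q * T) ^ (1/q) ≤ C * W ^ m := by
      refine le_trans (Real.rpow_le_rpow (by positivity) hsum_lb (by positivity)) ?_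
      exact hCk
    have h6 : (((1/2:ℝ)^k / T) ^ q * T) ^ (1/q) = ((1/2:ℝ)^k / T) * T ^ (1/q) := by
      rw [Real.mul_rpow (by positivity) hTp.le, ← Real.rpow_mul (by positivity),
        mul_one_div, div_self hq0.ne', Real.rpow_one]
    have h7 : ((1/2:ℝ)^k / T) * T ^ (1/q) = (1/2:ℝ)^k * T ^ ((1-q)/q) := by
      have he : (1-q)/q = 1/q - 1 := by field_simp
      rw [he, Real.rpow_sub hTp, Real.rpow_one, div_mul_eq_mul_div, mul_div_assoc]
    -- lower bound for T ^ ((1-q)/q)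
    have h8 : ((2:ℝ)^k * ((k:ℝ)+1) * W) ^ m < T ^ ((1-q)/q) := by
      have h9 : ((2:ℝ)^k * ((k:ℝ)+1) * W) ^ m < (T ^ ((1-q)/(↑m*q))) ^ m := by
        refine pow_lt_pow_left₀ hxk ?_ hm.ne'
        positivity
      calc ((2:ℝ)^k * ((k:ℝ)+1) * W) ^ m < (T ^ ((1-q)/(↑m*q))) ^ m := h9
        _ = T ^ ((1-q)/q) := by
            rw [← Real.rpow_natCast (T ^ ((1-q)/(↑m*q))) m, ← Real.rpow_mul hTp.le, hexp]
    -- combine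
    have h12 : (1/2:ℝ)^k * (2:ℝ)^k = 1 := by
      rw [← mul_pow]; norm_num
    have key : ((k:ℝ)+1) ≤ (1/2:ℝ)^k * (((2:ℝ)^k)^m * ((k:ℝ)+1)^m) := by
      have e2 : (2:ℝ)^k ≤ ((2:ℝ)^k)^m := le_self_pow₀ (one_le_pow₀ (by norm_num : (1:ℝ) ≤ 2)) hm.ne'
      have e3 : ((k:ℝ)+1) ≤ ((k:ℝ)+1)^m := le_self_pow₀ (by linarith [Nat.cast_nonneg (α := ℝ) k]) hm.ne'
      calc ((k:ℝ)+1) = ((1/2:ℝ)^k * (2:ℝ)^k) * ((k:ℝ)+1) := by rw [h12, one_mul]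
        _ = (1/2:ℝ)^k * ((2:ℝ)^k * ((k:ℝ)+1)) := by ring
        _ ≤ (1/2:ℝ)^k * (((2:ℝ)^k)^m * ((k:ℝ)+1)^m) := by
            refine mul_le_mul_of_nonneg_left ?_ (by positivity)
            exact mul_le_mul e2 e3 (by positivity) (by positivity)
    have h10 : ((k:ℝ)+1) * W ^ m ≤ (1/2:ℝ)^k * ((2:ℝ)^k * ((k:ℝ)+1) * W) ^ m := by
      have := mul_le_mul_of_nonneg_right key (pow_nonneg hWp.le m)
      calc ((k:ℝ)+1) * W ^ m ≤ ((1/2:ℝ)^k * (((2:ℝ)^k)^m * ((k:ℝ)+1)^m)) * W ^ m := this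
        _ = (1/2:ℝ)^k * ((2:ℝ)^k * ((k:ℝ)+1) * W) ^ m := by rw [mul_pow, mul_pow]; ring
    have h11 : ((k:ℝ)+1) * W ^ m < C * W ^ m := by
      calc ((k:ℝ)+1) * W ^ m ≤ (1/2:ℝ)^k * ((2:ℝ)^k * ((k:ℝ)+1) * W) ^ m := h10
        _ < (1/2:ℝ)^k * T ^ ((1-q)/q) := by
            exact mul_lt_mul_of_pos_left h8 (by positivity)
        _ = ((1/2:ℝ)^k / T) * T ^ (1/q) := h7.symm
        _ = (((1/2:ℝ)^k / T) ^ q * T) ^ (1/q) := h6.symm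
        _ ≤ C * W ^ m := h5
    exact lt_of_mul_lt_mul_right h11 (pow_nonneg hWp.le m)
  obtain ⟨k, hk'⟩ := exists_nat_gt C
  have h := hk k
  linarith
end

section
/- Let X be a real infinite-dimensional Banach space, m an even positive integer, 0 < q < 1, r ≥ 1, and suppose there is K > 0 with ‖P‖_{as(q;r)} ≤ K ‖P‖ for all continuous m-homogeneous polynomials P : X → ℝ. Then for all n and x_1, ..., x_n ∈ X, (∑_{j=1}^n ‖x_j‖^{mq/(1-q)})^{(1-q)/(mq)} ≤ K^{1/m} · sup_{φ ∈ B_{X*}} (∑_{j=1}^n |φ(x_j)|^r)^{1/r}. -/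
open scoped BigOperators

/-- The sup norm of `P` over the closed unit ball. -/
noncomputable def polyNorm {X : Type*} [NormedAddCommGroup X] (P : X → ℝ) : ℝ :=
  ⨆ x : {x : X // ‖x‖ ≤ 1}, ‖P (x : X)‖

/-- If `‖P‖_{as(q;r)} ≤ K‖P‖` uniformly over continuous `m`-homogeneous real polynomials
(`m` even), then `(∑‖x_j‖^{mq/(1-q)})^{(1-q)/(mq)} ≤ K^{1/m}·‖(x_j)‖_{w,r}`. -/
theorem stmt10 {X : Type*} [NormedAddCommGroup X] [NormedSpace ℝ X] [CompleteSpace X]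
    (hdim : ¬ FiniteDimensional ℝ X) (m : ℕ) (hm : 0 < m) (hmeven : Even m)
    (q r K : ℝ) (hq0 : 0 < q) (hq1 : q < 1) (hr : 1 ≤ r) (hK : 0 < K)
    (hsum : ∀ P : X → ℝ, IsHomogPoly m P → ∀ (n : ℕ) (x : Fin n → X),
      (∑ j, ‖P (x j)‖ ^ q) ^ (1 / q) ≤ K * polyNorm P * (weakNorm ℝ r x) ^ m) :
    ∀ (n : ℕ) (x : Fin n → X),
      (∑ j, ‖x j‖ ^ (m * q / (1 - q))) ^ ((1 - q) / (m * q)) ≤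
        K ^ ((1 : ℝ) / m) * weakNorm ℝ r x := by
  intro n x
  have h1q : (0:ℝ) < 1 - q := by linarith
  have hmR : (0:ℝ) < (m:ℝ) := by exact_mod_cast hm
  set α : ℝ := m * q / (1 - q) with hαdef
  have hα : 0 < α := by positivity
  set W : ℝ := weakNorm ℝ r x with hWdef
  have hW0 : 0 ≤ W := by
    apply Real.iSup_nonneg
    intro φ
    exact Real.rpow_nonneg (Finset.sum_nonneg fun j _ =>
      Real.rpow_nonneg (norm_nonneg _) _) _
  set S : ℝ := ∑ j, ‖x j‖ ^ α with hSdef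
  have hS0 : 0 ≤ S := Finset.sum_nonneg fun j _ => Real.rpow_nonneg (norm_nonneg _) _
  have hRHS0 : 0 ≤ K ^ ((1:ℝ)/m) * W := mul_nonneg (Real.rpow_nonneg hK.le _) hW0
  rcases eq_or_lt_of_le hS0 with hS | hS
  · rw [← hS, Real.zero_rpow (by positivity)]
    exact hRHS0
  -- norming functionals
  obtain ⟨φ, hφ1, hφ2⟩ : ∃ φ : Fin n → (X →L[ℝ] ℝ), (∀ j, ‖φ j‖ ≤ 1) ∧ ∀ j, φ j (x j) = ‖x j‖ := by
    choose φ h1 h2 using fun j => exists_dual_vector'' ℝ (x j)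
    exact ⟨φ, h1, fun j => by simpa using h2 j⟩
  set c : Fin n → ℝ := fun j => ‖x j‖ ^ α with hcdef
  have hc0 : ∀ j, 0 ≤ c j := fun j => Real.rpow_nonneg (norm_nonneg _) _
  set A : ContinuousMultilinearMap ℝ (fun _ : Fin m => X) ℝ :=
    ∑ j, c j • (ContinuousMultilinearMap.mkPiAlgebra ℝ (Fin m) ℝ).compContinuousLinearMap
      (fun _ => φ j) with hAdef
  set P : X → ℝ := fun y => ∑ j, c j * (φ j y) ^ m with hPdef
  have hPA : IsHomogPoly m P := by
    refine ⟨A, fun y => ?_⟩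
    simp [hAdef, hPdef, ContinuousMultilinearMap.sum_apply,
      ContinuousMultilinearMap.smul_apply,
      ContinuousMultilinearMap.compContinuousLinearMap_apply,
      ContinuousMultilinearMap.mkPiAlgebra_apply, Finset.prod_const, smul_eq_mul]
  have hPnonneg : ∀ y, 0 ≤ P y :=
    fun y => Finset.sum_nonneg fun j _ => mul_nonneg (hc0 j) (hmeven.pow_nonneg _)
  -- polyNorm bound
  haveI : Nonempty {y : X // ‖y‖ ≤ 1} := ⟨⟨0, by simp⟩⟩
  have hPnorm : polyNorm P ≤ S := by
    apply ciSup_le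
    rintro ⟨y, hy⟩
    calc ‖P y‖ ≤ ∑ j, ‖c j * (φ j y) ^ m‖ := norm_sum_le _ _
      _ ≤ ∑ j, c j := by
          apply Finset.sum_le_sum
          intro j _
          rw [norm_mul, norm_pow, Real.norm_of_nonneg (hc0 j)]
          have h1 : ‖φ j y‖ ≤ 1 := by
            calc ‖φ j y‖ ≤ ‖φ j‖ * ‖y‖ := (φ j).le_opNorm y
              _ ≤ 1 * 1 := mul_le_mul (hφ1 j) hy (norm_nonneg _) zero_le_one
              _ = 1 := one_mul 1
          calc c j * ‖φ j y‖ ^ m ≤ c j * 1 := by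
                exact mul_le_mul_of_nonneg_left (pow_le_one₀ (norm_nonneg _) h1) (hc0 j)
            _ = c j := mul_one _
      _ = S := rfl
  -- pointwise lower bound
  have hexp : (α + m) * q = α := by
    rw [hαdef, div_add' _ _ _ h1q.ne', div_mul_eq_mul_div, div_eq_div_iff h1q.ne' h1q.ne']
    ring
  have hlow : ∀ k, ‖x k‖ ^ α ≤ ‖P (x k)‖ ^ q := by
    intro k
    have h1 : c k * ‖x k‖ ^ m ≤ P (x k) := by
      have h := Finset.single_le_sum
        (f := fun j => c j * (φ j (x k)) ^ m)
        (fun j _ => mul_nonneg (hc0 j) (hmeven.pow_nonneg _)) (Finset.mem_univ k)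
      simp only [hφ2 k] at h
      exact h
    have h2 : c k * ‖x k‖ ^ m = ‖x k‖ ^ (α + (m:ℝ)) := by
      rw [Real.rpow_add_of_nonneg (norm_nonneg _) hα.le (by positivity),
        Real.rpow_natCast]
    have h3 : (c k * ‖x k‖ ^ m) ^ q = ‖x k‖ ^ α := by
      rw [h2, ← Real.rpow_mul (norm_nonneg _), hexp]
    calc ‖x k‖ ^ α = (c k * ‖x k‖ ^ m) ^ q := h3.symm
      _ ≤ (P (x k)) ^ q := Real.rpow_le_rpow (by positivity) h1 hq0.le
      _ ≤ ‖P (x k)‖ ^ q := Real.rpow_le_rpow (hPnonneg _) (le_abs_self _) hq0.le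
  have hSle : S ≤ ∑ j, ‖P (x j)‖ ^ q := Finset.sum_le_sum fun j _ => hlow j
  have hmain : S ^ ((1:ℝ)/q) ≤ K * S * W ^ m := by
    calc S ^ ((1:ℝ)/q) ≤ (∑ j, ‖P (x j)‖ ^ q) ^ ((1:ℝ)/q) :=
          Real.rpow_le_rpow hS0 hSle (by positivity)
      _ ≤ K * polyNorm P * W ^ m := hsum P hPA n x
      _ ≤ K * S * W ^ m := by
          apply mul_le_mul_of_nonneg_right _ (pow_nonneg hW0 m)
          exact mul_le_mul_of_nonneg_left hPnorm hK.le
  -- divide by S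
  have hdiv : S ^ ((1 - q)/q) ≤ K * W ^ m := by
    have key : S ^ ((1 - q)/q) * S = S ^ ((1:ℝ)/q) := by
      nth_rewrite 2 [← Real.rpow_one S]
      rw [← Real.rpow_add hS]
      norm_num
      rw [div_add' _ _ _ (ne_of_gt hq0)]
      congr 1
      ring
    have : S ^ ((1 - q)/q) * S ≤ (K * W ^ m) * S := by
      rw [key]
      calc S ^ ((1:ℝ)/q) ≤ K * S * W ^ m := hmain
        _ = (K * W ^ m) * S := by ring
    exact le_of_mul_le_mul_right this hS
  -- take m-th roots
  have hgoal : (1 - q) / (m * q) = ((1 - q)/q) * ((1:ℝ)/m) := by ring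
  rw [hgoal, Real.rpow_mul hS0]
  calc (S ^ ((1-q)/q)) ^ ((1:ℝ)/m) ≤ (K * W ^ m) ^ ((1:ℝ)/m) :=
        Real.rpow_le_rpow (Real.rpow_nonneg hS0 _) hdiv (by positivity)
    _ = K ^ ((1:ℝ)/m) * W := by
        rw [Real.mul_rpow hK.le (pow_nonneg hW0 m), ← Real.rpow_natCast W m,
          ← Real.rpow_mul hW0, mul_one_div, div_self (ne_of_gt hmR), Real.rpow_one]
end

section
/- Let X be a Banach space such that every continuous bilinear form on X × X is 1-dominated. Then every bounded linear operator from X to its dual X* is absolutely 1-summing. -/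
open scoped BigOperators

private lemma ad_summable (f : ℕ → ℝ) (hf : ∀ n, 0 ≤ f n) :
    Summable (fun n => f n / (1 + ∑ k ∈ Finset.range (n+1), f k) ^ 2) := by
  set T : ℕ → ℝ := fun n => 1 + ∑ k ∈ Finset.range n, f k with hT
  have hTpos : ∀ n, 0 < T n := fun n => by
    have : 0 ≤ ∑ k ∈ Finset.range n, f k := Finset.sum_nonneg fun k _ => hf k
    simp only [hT]; linarith
  have hTsucc : ∀ n, T (n+1) = T n + f n := fun n => by
    simp only [hT, Finset.sum_range_succ]; ring
  have hmono : ∀ n, T n ≤ T (n+1) := fun n => by rw [hTsucc]; linarith [hf n]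
  have algebra : ∀ s d : ℝ, 0 < s → 0 ≤ d → 1/s - 1/(s+d) = d/(s*(s+d)) := by
    intro s d hs hd
    have h1 : s ≠ 0 := hs.ne'
    have h2 : s + d ≠ 0 := by linarith
    field_simp
    ring
  apply summable_of_sum_range_le (c := 1)
  · intro n; exact div_nonneg (hf n) (by positivity)
  · intro m
    calc ∑ n ∈ Finset.range m, f n / T (n+1) ^ 2
        ≤ ∑ n ∈ Finset.range m, (1 / T n - 1 / T (n+1)) := by
          apply Finset.sum_le_sum
          intro n _
          have h1 := hTpos n
          have h2 := hTpos (n+1)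
          have key : 1 / T n - 1 / T (n+1) = f n / (T n * T (n+1)) := by
            rw [hTsucc]; exact algebra _ _ (hTpos n) (hf n)
          rw [key]
          apply div_le_div_of_nonneg_left (hf n) (by positivity)
          calc T n * T (n+1) ≤ T (n+1) * T (n+1) := by nlinarith [hmono n]
            _ = T (n+1) ^ 2 := by ring
      _ = 1 / T 0 - 1 / T m := Finset.sum_range_sub' (fun i => 1 / T i) m
      _ ≤ 1 := by
          have hT0 : T 0 = 1 := by simp [hT]
          have h1 := hTpos m
          have h2 : 0 ≤ 1 / T m := by positivity
          rw [hT0]; linarith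

private lemma ad_not_summable (f : ℕ → ℝ) (hf : ∀ n, 0 ≤ f n) (hns : ¬ Summable f) :
    ¬ Summable (fun n => f n / (1 + ∑ k ∈ Finset.range (n+1), f k)) := by
  set T : ℕ → ℝ := fun n => 1 + ∑ k ∈ Finset.range n, f k with hT
  have hTpos : ∀ n, 0 < T n := fun n => by
    have : 0 ≤ ∑ k ∈ Finset.range n, f k := Finset.sum_nonneg fun k _ => hf k
    simp only [hT]; linarith
  have hmono : Monotone T := by
    apply monotone_nat_of_le_succ
    intro n
    simp only [hT, Finset.sum_range_succ]
    linarith [hf n]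
  have hTtop : Filter.Tendsto T Filter.atTop Filter.atTop := by
    have h1 := (not_summable_iff_tendsto_nat_atTop_of_nonneg hf).mp hns
    simpa [hT] using Filter.tendsto_atTop_add_const_left _ 1 h1
  intro hsum0
  set g : ℕ → ℝ := fun n => f n / T (n+1) with hg
  have hsum : Summable g := hsum0
  clear hsum0
  clear_value T
  have hgnn : ∀ n, 0 ≤ g n := fun n => div_nonneg (hf n) (hTpos (n+1)).le
  have htend := hsum.hasSum.tendsto_sum_nat
  set c := ∑' n, g n with hc
  have hev : ∀ᶠ N in Filter.atTop, c - 1/2 < ∑ n ∈ Finset.range N, g n := by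
    apply htend.eventually_const_lt; linarith
  obtain ⟨N, hN⟩ := hev.exists
  have hev2 : ∀ᶠ m in Filter.atTop, 2 * T N ≤ T m := hTtop.eventually_ge_atTop _
  obtain ⟨m, hm2, hmN⟩ := (hev2.and (Filter.eventually_ge_atTop N)).exists
  have hub : ∑ n ∈ Finset.Ico N m, g n < 1/2 := by
    have h1 : ∑ n ∈ Finset.Ico N m, g n
        = ∑ n ∈ Finset.range m, g n - ∑ n ∈ Finset.range N, g n :=
      Finset.sum_Ico_eq_sub _ hmN
    have h2 : ∑ n ∈ Finset.range m, g n ≤ c :=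
      Summable.sum_le_tsum _ (fun i _ => hgnn i) hsum
    linarith [hN]
  have hlb : 1/2 ≤ ∑ n ∈ Finset.Ico N m, g n := by
    have key : ∀ n ∈ Finset.Ico N m, f n / T m ≤ g n := by
      intro n hn
      rw [Finset.mem_Ico] at hn
      exact div_le_div_of_nonneg_left (hf n) (hTpos (n+1)) (hmono hn.2)
    have hsumIco : ∑ n ∈ Finset.Ico N m, f n = T m - T N := by
      rw [Finset.sum_Ico_eq_sub _ hmN]
      simp only [hT]; ring
    calc (1:ℝ)/2 ≤ (T m - T N) / T m := by
          rw [le_div_iff₀ (hTpos m)]; linarith [hm2, hTpos N]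
      _ = ∑ n ∈ Finset.Ico N m, f n / T m := by rw [← Finset.sum_div, hsumIco]
      _ ≤ ∑ n ∈ Finset.Ico N m, g n := Finset.sum_le_sum key
  linarith

/-- ℓ₂ duality via Abel–Dini: if `b ↦ ∑ b j * a j` converges for every nonneg
square-summable `b`, then `a` is square-summable. -/
private lemma l2_duality (a : ℕ → ℝ) (ha : ∀ j, 0 ≤ a j)
    (h : ∀ b : ℕ → ℝ, (∀ j, 0 ≤ b j) → Summable (fun j => b j ^ 2) →
      Summable (fun j => b j * a j)) :
    Summable (fun j => a j ^ 2) := by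
  by_contra hns
  set f : ℕ → ℝ := fun j => a j ^ 2 with hf
  have hfnn : ∀ j, 0 ≤ f j := fun j => sq_nonneg _
  set T : ℕ → ℝ := fun n => 1 + ∑ k ∈ Finset.range (n+1), f k with hT
  have hTpos : ∀ n, 0 < T n := fun n => by
    have : 0 ≤ ∑ k ∈ Finset.range (n+1), f k := Finset.sum_nonneg fun k _ => hfnn k
    simp only [hT]; linarith
  set b : ℕ → ℝ := fun j => a j / T j with hb
  have hbnn : ∀ j, 0 ≤ b j := fun j => div_nonneg (ha j) (hTpos j).le
  have hb2 : Summable (fun j => b j ^ 2) := by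
    have := ad_summable f hfnn
    apply this.congr
    intro j
    simp only [hb, hf, hT, div_pow]
  have := h b hbnn hb2
  have hcontra : Summable (fun j => f j / T j) := by
    apply this.congr
    intro j
    simp only [hb, hf, hT]
    ring
  exact ad_not_summable f hfnn hns hcontra

set_option maxHeartbeats 1000000 in
/-- If every continuous bilinear form on `X × X` is 1-dominated, then every bounded linear
operator from `X` to its dual `X*` is absolutely 1-summing. -/
theorem stmt17 (𝕜 : Type*) [RCLike 𝕜] {X : Type*} [NormedAddCommGroup X] [NormedSpace 𝕜 X]
    [CompleteSpace X]
    (hdom : ∀ A : X →L[𝕜] X →L[𝕜] 𝕜, ∀ x y : ℕ → X,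
      WeaklySummable 𝕜 1 x → WeaklySummable 𝕜 1 y →
        Summable fun j => ‖A (x j) (y j)‖ ^ ((1 : ℝ) / 2)) :
    ∀ u : X →L[𝕜] (X →L[𝕜] 𝕜), ∀ x : ℕ → X, WeaklySummable 𝕜 1 x →
      Summable fun j => ‖u (x j)‖ := by
  intro u x hx
  set a : ℕ → ℝ := fun j => Real.sqrt ‖u (x j)‖ with haDef
  have ha : ∀ j, 0 ≤ a j := fun j => Real.sqrt_nonneg _
  have hasq : ∀ j, a j ^ 2 = ‖u (x j)‖ := fun j => Real.sq_sqrt (norm_nonneg _)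
  have key : ∀ b : ℕ → ℝ, (∀ j, 0 ≤ b j) → Summable (fun j => b j ^ 2) →
      Summable (fun j => b j * a j) := by
    intro b hb hb2
    have hz : ∀ j, ∃ z : X, ‖z‖ ≤ 1 ∧ ‖u (x j)‖ ≤ 2 * ‖u (x j) z‖ := by
      intro j
      by_cases h0 : u (x j) = 0
      · exact ⟨0, by simp [h0]⟩
      · have hpos : 0 < ‖u (x j)‖ := norm_pos_iff.mpr h0
        obtain ⟨z, hz1, hz2⟩ := (u (x j)).exists_lt_apply_of_lt_opNorm
          (show ‖u (x j)‖ / 2 < ‖u (x j)‖ by linarith)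
        exact ⟨z, hz1.le, by linarith⟩
    choose z hz1 hz2 using hz
    set y : ℕ → X := fun j => ((b j ^ 2 : ℝ) : 𝕜) • z j with hy
    have hynorm : ∀ (ψ : X →L[𝕜] 𝕜) j, ‖ψ (y j)‖ = b j ^ 2 * ‖ψ (z j)‖ := by
      intro ψ j
      simp only [hy, map_smul, norm_smul, RCLike.norm_ofReal, abs_of_nonneg (sq_nonneg (b j))]
    have hyw : WeaklySummable 𝕜 1 y := by
      intro φ
      refine Summable.of_nonneg_of_le (fun j => by positivity) (fun j => ?_)
        (hb2.mul_left ‖φ‖)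
      rw [Real.rpow_one, hynorm φ j]
      calc b j ^ 2 * ‖φ (z j)‖ ≤ b j ^ 2 * (‖φ‖ * ‖z j‖) :=
            mul_le_mul_of_nonneg_left (φ.le_opNorm _) (sq_nonneg _)
        _ ≤ b j ^ 2 * ‖φ‖ :=
            mul_le_mul_of_nonneg_left
              (mul_le_of_le_one_right φ.opNorm_nonneg (hz1 j)) (sq_nonneg _)
        _ = ‖φ‖ * b j ^ 2 := mul_comm _ _
    have hsum := hdom u x y hx hyw
    refine Summable.of_nonneg_of_le (fun j => mul_nonneg (hb j) (ha j)) (fun j => ?_)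
      (hsum.mul_left (Real.sqrt 2))
    have hbapos : 0 ≤ b j * a j := mul_nonneg (hb j) (ha j)
    have h2 : (b j * a j) ^ 2 / 2 ≤ ‖u (x j) (y j)‖ := by
      rw [hynorm (u (x j)) j]
      have h3 := hz2 j
      have h4 := hasq j
      nlinarith [sq_nonneg (b j), norm_nonneg (u (x j) (z j))]
    have hsqrt2 : Real.sqrt 2 ≠ 0 := by positivity
    calc b j * a j = Real.sqrt 2 * Real.sqrt ((b j * a j) ^ 2 / 2) := by
          rw [Real.sqrt_div (sq_nonneg _), Real.sqrt_sq hbapos,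
            mul_comm (Real.sqrt 2) (b j * a j / Real.sqrt 2),
            div_mul_cancel₀ _ hsqrt2]
      _ ≤ Real.sqrt 2 * Real.sqrt ‖u (x j) (y j)‖ :=
          mul_le_mul_of_nonneg_left (Real.sqrt_le_sqrt h2) (Real.sqrt_nonneg 2)
      _ = Real.sqrt 2 * ‖u (x j) (y j)‖ ^ ((1:ℝ)/2) := by rw [Real.sqrt_eq_rpow ‖u (x j) (y j)‖]
  have hsq := l2_duality a ha key
  exact hsq.congr hasq
end
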